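/- Let α be a positive real. Let G be a graph on n vertices with minimum degree at least n/2, and let A be a set of vertices with |A| ≥ n/2 and |A| − |Ā| ≤ 32α·n such that e(A, Ā) ≤ 6α·n². Then the number of edges of G inside A satisfies e(A) ≥ C(|A|, 2) − 11α·n², where C(|A|,2) = |A|(|A|−1)/2. -/

import Mathlib

open SimpleGraph Finset
open scoped Classical

universe u

noncomputable section

/-- `1/2^23`, the value of `α` fixed in the random-subgraph section of the paper. -/
def paperAlpha : ℝ := 1 / 2 ^ 23

/-- The graph on `V` consisting of the edges of the walk `P`. -/
def walkGraph {V : Type u} {G : SimpleGraph V} {a b : V} (P : G.Walk a b) : SimpleGraph V :=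
  SimpleGraph.fromEdgeSet {e | e ∈ P.edges}

/-- There is a path of length `ℓ` from `v` to `w` in `H` containing the edge `e`. -/
def SameLenPath {V : Type u} (H : SimpleGraph V) (ℓ : ℕ) (e : Sym2 V) (v w : V) : Prop :=
  ∃ Q : H.Walk v w, Q.IsPath ∧ Q.length = ℓ ∧ e ∈ Q.edges

/-- There is a path in `H` longer than `ℓ` containing the edge `e`. -/
def LongerPath {V : Type u} (H : SimpleGraph V) (ℓ : ℕ) (e : Sym2 V) : Prop :=
  ∃ (x y : V) (Q : H.Walk x y), Q.IsPath ∧ ℓ < Q.length ∧ e ∈ Q.edges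

/-- `S` and `T` witness the rotation property of `G` for the path `P` with fixed edge `e`:
`S` has at least `ξ n` vertices, and for every `v ∈ S` the set `T v` has at least `ξ n`
vertices and for every `w ∈ T v` there is a path of the same length as `P` in `G ∪ P`
containing `e` with endpoints `v` and `w`. -/
def REwitness {V : Type u} [Fintype V] (ξ : ℝ) (G : SimpleGraph V) {a b : V}
    (P : (⊤ : SimpleGraph V).Walk a b) (e : Sym2 V) (S : Finset V) (T : V → Finset V) :
    Prop :=
  ξ * (Fintype.card V : ℝ) ≤ (S.card : ℝ) ∧
    ∀ v ∈ S, ξ * (Fintype.card V : ℝ) ≤ ((T v).card : ℝ) ∧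
      ∀ w ∈ T v, SameLenPath (G ⊔ walkGraph P) P.length e v w

/-- Property `RE(ξ)`. -/
def PropRE {V : Type u} [Fintype V] (ξ : ℝ) (G : SimpleGraph V) : Prop :=
  G.Connected ∧
    ∀ (a b : V) (P : (⊤ : SimpleGraph V).Walk a b), P.IsPath → ∀ e ∈ P.edges,
      LongerPath (G ⊔ walkGraph P) P.length e ∨ ∃ S T, REwitness ξ G P e S T

/-- `G₂` complements `G₁` (a graph with property `RE(ξ)`). -/
def ComplementsRE {V : Type u} [Fintype V] (ξ : ℝ) (G₁ G₂ : SimpleGraph V) : Prop :=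
  ∀ (a b : V) (P : (⊤ : SimpleGraph V).Walk a b), P.IsPath → ∀ e ∈ P.edges,
    LongerPath (G₁ ⊔ walkGraph P) P.length e ∨
      ∃ S T, REwitness ξ G₁ P e S T ∧
        ∃ v ∈ S, ∃ w ∈ T v, (G₁ ⊔ G₂ ⊔ walkGraph P).Adj v w

/-- The set `N(X)` of vertices having a neighbour in `X`. -/
def nbrSet {V : Type u} [Fintype V] (G : SimpleGraph V) (X : Finset V) : Finset V :=
  Finset.univ.filter fun v => ∃ x ∈ X, G.Adj x v

/-- `e(A,B)`: the number of pairs `(a,b) ∈ A × B` with `{a,b}` an edge of `G`. -/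
def eBetween {V : Type u} (G : SimpleGraph V) (A B : Finset V) : ℕ :=
  ((A ×ˢ B).filter fun p => G.Adj p.1 p.2).card

/-- `e(A)`: the number of edges of `G` with both endpoints in `A`. -/
def eIn {V : Type u} [Fintype V] (G : SimpleGraph V) (A : Finset V) : ℕ :=
  (G.edgeFinset.filter fun e => ∀ v ∈ e, v ∈ A).card

/-- A half-set: a set of `⌊n/2⌋` or `⌈n/2⌉` vertices. -/
def IsHalfSet (n : ℕ) (A : Finset (Fin n)) : Prop :=
  A.card = n / 2 ∨ A.card = (n + 1) / 2

/-- A graph is Hamilton connected if every pair of distinct vertices is joined by a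
Hamilton path. -/
def HamiltonConnected {V : Type u} (G : SimpleGraph V) : Prop :=
  ∀ x y : V, x ≠ y → ∃ p : G.Walk x y, p.IsHamiltonian

/-- The probability that the random subgraph of `G`, obtained by retaining every edge of `G`
independently with probability `p`, satisfies the predicate `Q`. -/
def subgraphProb {V : Type u} [Fintype V] (G : SimpleGraph V) (p : ℝ)
    (Q : SimpleGraph V → Prop) : ℝ :=
  ∑ S ∈ G.edgeFinset.powerset,
    if Q (SimpleGraph.fromEdgeSet (↑S : Set (Sym2 V))) then
      p ^ S.card * (1 - p) ^ (G.edgeFinset.card - S.card)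
    else 0

/-- `MakerWins board win b M B` : in the Maker-Breaker game on `board` with winning-set
predicate `win` (on Maker's claimed set) and Breaker bias `b`, with Maker to move, Maker
having claimed `M` and Breaker having claimed `B`, Maker has a winning strategy. -/
inductive MakerWins {X : Type u} (board : Finset X) (win : Finset X → Prop) (b : ℕ) :
    Finset X → Finset X → Prop where
  | win_now : ∀ M B : Finset X, win M → MakerWins board win b M B
  | move : ∀ (M B : Finset X) (x : X), x ∈ board → x ∉ M → x ∉ B →
      (∀ B' : Finset X, B' ⊆ board \ (insert x M ∪ B) → B'.card ≤ b →
        MakerWins board win b (insert x M) (B ∪ B')) →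
      MakerWins board win b M B

/-- A half-expander with parameters `ε` and `r`. -/
def IsHalfExpander {V : Type u} [Fintype V] (G : SimpleGraph V) (ε r : ℝ) : Prop :=
  (∀ X : Finset V, (X.card : ℝ) ≤ ε * (Fintype.card V : ℝ) / r →
      r * (X.card : ℝ) ≤ ((nbrSet G X).card : ℝ)) ∧
  (∀ X : Finset V, (Fintype.card V : ℝ) / (ε * r) ≤ (X.card : ℝ) →
      (1 / 2 - ε) * (Fintype.card V : ℝ) ≤ ((nbrSet G X).card : ℝ)) ∧
  (∀ X Y : Finset V, Disjoint X Y →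
      (1 / 2 - ε ^ ((1 : ℝ) / 5)) * (Fintype.card V : ℝ) ≤ (X.card : ℝ) →
      (1 / 2 - ε ^ ((1 : ℝ) / 5)) * (Fintype.card V : ℝ) ≤ (Y.card : ℝ) →
      2 * (Fintype.card V : ℝ) < (eBetween G X Y : ℝ))

/-- An expander with parameters `ε` and `r`. -/
def IsExpander {V : Type u} [Fintype V] (G : SimpleGraph V) (ε r : ℝ) : Prop :=
  (∀ X : Finset V, (X.card : ℝ) ≤ (Fintype.card V : ℝ) / r ^ ((3 : ℝ) / 2) →
      r * (X.card : ℝ) ≤ ((nbrSet G X).card : ℝ)) ∧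
  (∀ X : Finset V, (Fintype.card V : ℝ) / r ^ ((3 : ℝ) / 4) ≤ (X.card : ℝ) →
      (1 - ε) * (Fintype.card V : ℝ) ≤ ((nbrSet G X).card : ℝ))

/-- A special frame `(V₁, V₂, S_V, S_E)` of `G` (with `|V₁| = |V₂| + k`). -/
structure IsSpecialFrame {V : Type u} [Fintype V] (G : SimpleGraph V) (k : ℕ)
    (V₁ V₂ SV : Finset V) (SE : Finset (Sym2 V)) : Prop where
  union_eq : V₁ ∪ V₂ = Finset.univ
  disj : Disjoint V₁ V₂
  card_eq : V₁.card = V₂.card + k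
  SV_sub : SV ⊆ V₁
  SV_card : SV.card = k
  SE_card : SE.card = k
  SE_isEdge : ∀ e ∈ SE, e ∈ G.edgeSet
  SE_sub : ∀ e ∈ SE, ∀ v ∈ e, v ∈ V₁
  SE_disj : ∀ e ∈ SE, ∀ e' ∈ SE, e ≠ e' → ∀ v ∈ e, v ∉ e'
  SV_unique : ∀ v ∈ SV, ∃! e, e ∈ SE ∧ v ∈ e

/-- A matched special frame `(V₁, V₂, S_V, S_E, f)` of `G`:  a special frame together with
a perfect matching `f` (in `G`) between the vertices of `V₁' = V₁ \ S_V` and `V₂`. -/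
structure IsMatchedFrame {V : Type u} [Fintype V] (G : SimpleGraph V) (k : ℕ)
    (V₁ V₂ SV : Finset V) (SE : Finset (Sym2 V)) (f : V → V)
    extends IsSpecialFrame G k V₁ V₂ SV SE : Prop where
  f_mem : ∀ v ∈ V₁ \ SV, f v ∈ V₂ ∧ G.Adj v (f v) ∧ f (f v) = v
  f_mem' : ∀ w ∈ V₂, f w ∈ V₁ \ SV ∧ f (f w) = w

/-- The framed subgraph: the subgraph of `G` induced by the edges between `V₁` and `V₂`. -/
def framedSubgraph {V : Type u} (G : SimpleGraph V) (V₁ V₂ : Finset V) : SimpleGraph V where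
  Adj v w := G.Adj v w ∧ ((v ∈ V₁ ∧ w ∈ V₂) ∨ (v ∈ V₂ ∧ w ∈ V₁))
  symm := by
    constructor
    intro v w h
    refine ⟨h.1.symm, ?_⟩
    tauto
  loopless := ⟨fun v h => G.loopless.irrefl v h.1⟩

/-- A proper walk with respect to the matched special frame `(V₁, V₂, SV, SE, f)`:
a path all of whose edges intersect both `V₁` and `V₂` or are special edges, which
contains the special edge of each of its special vertices, and which satisfies
`V₁' ∩ V(P) = f(V₂ ∩ V(P))`. -/
def ProperWalk {V : Type u} (V₁ V₂ SV : Finset V) (SE : Finset (Sym2 V)) (f : V → V)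
    {G' : SimpleGraph V} {a b : V} (P : G'.Walk a b) : Prop :=
  P.IsPath ∧
  (V₁ \ SV).filter (· ∈ P.support) = (V₂.filter (· ∈ P.support)).image f ∧
  (∀ v ∈ SV, v ∈ P.support → ∃ e ∈ SE, v ∈ e ∧ e ∈ P.edges) ∧
  (∀ e ∈ P.edges, e ∈ SE ∨ ((∃ v ∈ V₁, v ∈ e) ∧ (∃ v ∈ V₂, v ∈ e)))

/-- There is a proper path in `H` longer than `ℓ`. -/
def BipLonger {V : Type u} (H : SimpleGraph V) (V₁ V₂ SV : Finset V) (SE : Finset (Sym2 V))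
    (f : V → V) (ℓ : ℕ) : Prop :=
  ∃ (x y : V) (Q : H.Walk x y), ProperWalk V₁ V₂ SV SE f Q ∧ ℓ < Q.length

/-- `S ⊆ V₂` and `T` witness the bipartite rotation property of `G` for the proper path
`P`. -/
def BipREwitness {V : Type u} [Fintype V] (ξ : ℝ) (G : SimpleGraph V)
    (V₁ V₂ SV : Finset V) (SE : Finset (Sym2 V)) (f : V → V) {a b : V}
    (P : (⊤ : SimpleGraph V).Walk a b) (S : Finset V) (T : V → Finset V) : Prop :=
  S ⊆ V₂ ∧ ξ * (Fintype.card V : ℝ) ≤ (S.card : ℝ) ∧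
    ∀ v ∈ S, T v ⊆ V₁ ∧ ξ * (Fintype.card V : ℝ) ≤ ((T v).card : ℝ) ∧
      ∀ w ∈ T v, ∃ Q : (G ⊔ walkGraph P).Walk v w,
        ProperWalk V₁ V₂ SV SE f Q ∧ Q.length = P.length

/-- Property `BIPRE(ξ)` with respect to the partition `(V₁, V₂)`. -/
def BIPREwrt {V : Type u} [Fintype V] (ξ : ℝ) (G : SimpleGraph V) (V₁ V₂ : Finset V) :
    Prop :=
  ∃ (k : ℕ) (SV : Finset V) (SE : Finset (Sym2 V)) (f : V → V),
    IsMatchedFrame G k V₁ V₂ SV SE f ∧ (framedSubgraph G V₁ V₂).Connected ∧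
      ∀ (a b : V) (P : (⊤ : SimpleGraph V).Walk a b), ProperWalk V₁ V₂ SV SE f P →
        BipLonger (G ⊔ walkGraph P) V₁ V₂ SV SE f P.length ∨
          ∃ S T, BipREwitness ξ G V₁ V₂ SV SE f P S T

/-- Property `BIPRE(ξ)`. -/
def BIPRE {V : Type u} [Fintype V] (ξ : ℝ) (G : SimpleGraph V) : Prop :=
  ∃ V₁ V₂ : Finset V, BIPREwrt ξ G V₁ V₂

/-- `G₂` complements `G₁` (a graph with property `BIPRE(ξ)` w.r.t. `(V₁, V₂)`). -/
def BipComplementsWrt {V : Type u} [Fintype V] (ξ : ℝ) (G₁ G₂ : SimpleGraph V)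
    (V₁ V₂ : Finset V) : Prop :=
  ∃ (k : ℕ) (SV : Finset V) (SE : Finset (Sym2 V)) (f : V → V),
    IsMatchedFrame G₁ k V₁ V₂ SV SE f ∧ (framedSubgraph G₁ V₁ V₂).Connected ∧
      ∀ (a b : V) (P : (⊤ : SimpleGraph V).Walk a b), ProperWalk V₁ V₂ SV SE f P →
        BipLonger (G₁ ⊔ walkGraph P) V₁ V₂ SV SE f P.length ∨
          ∃ S T, BipREwitness ξ G₁ V₁ V₂ SV SE f P S T ∧
            ∃ v ∈ S, ∃ w ∈ T v, (G₁ ⊔ G₂ ⊔ walkGraph P).Adj v w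

/-- The expansion conditions of a `k`-bipartite-expander with parameters `ε` and `r`,
with respect to the frame data `(V₁, V₂, SE)` (here `V₁'' = V₁ ∖ V(S_E)`). -/
def IsBipExpander {V : Type u} [Fintype V] (G : SimpleGraph V) (V₁ V₂ : Finset V)
    (SE : Finset (Sym2 V)) (ε r : ℝ) : Prop :=
  (∀ X ⊆ V₁,
    ((X.card : ℝ) ≤ (Fintype.card V : ℝ) / r ^ ((3 : ℝ) / 2) →
      r * (X.card : ℝ) ≤ ((nbrSet G X ∩ V₂).card : ℝ)) ∧
    ((Fintype.card V : ℝ) / r ^ ((3 : ℝ) / 4) ≤ (X.card : ℝ) →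
      (1 - ε) * (V₂.card : ℝ) ≤ ((nbrSet G X ∩ V₂).card : ℝ))) ∧
  (∀ Y ⊆ V₂,
    ((Y.card : ℝ) ≤ (Fintype.card V : ℝ) / r ^ ((3 : ℝ) / 2) →
      r * (Y.card : ℝ) ≤
        ((nbrSet G Y ∩ V₁.filter fun v => ∀ e ∈ SE, v ∉ e).card : ℝ)) ∧
    ((Fintype.card V : ℝ) / r ^ ((3 : ℝ) / 4) ≤ (Y.card : ℝ) →
      (1 - ε) * ((V₁.filter fun v => ∀ e ∈ SE, v ∉ e).card : ℝ) ≤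
        ((nbrSet G Y ∩ V₁.filter fun v => ∀ e ∈ SE, v ∉ e).card : ℝ)))

end
lemma eBetween_eq_sum {V : Type*} (G : SimpleGraph V) (A B : Finset V) :
    eBetween G A B = ∑ a ∈ A, (B.filter (G.Adj a)).card := by
  classical
  unfold eBetween
  rw [Finset.card_filter, Finset.sum_product]
  exact Finset.sum_congr rfl fun a _ => (Finset.card_filter _ _).symm

lemma sum_deg_eq {V : Type*} [Fintype V] [DecidableEq V] (G : SimpleGraph V)
    (A : Finset V) :
    ∑ v ∈ A, G.degree v = eBetween G A A + eBetween G A Aᶜ := by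
  classical
  rw [eBetween_eq_sum, eBetween_eq_sum, ← Finset.sum_add_distrib]
  refine Finset.sum_congr rfl fun a _ => ?_
  rw [SimpleGraph.degree, SimpleGraph.neighborFinset_eq_filter,
    Finset.card_filter, Finset.card_filter, Finset.card_filter,
    ← Finset.sum_add_sum_compl A]

lemma eBetween_self {V : Type*} [Fintype V] [DecidableEq V] (G : SimpleGraph V) (A : Finset V) :
    eBetween G A A = 2 * eIn G A := by
  classical
  unfold eBetween eIn
  rw [Finset.card_eq_sum_card_fiberwise
    (ι := V × V) (M := Sym2 V) (f := fun p : V × V => Sym2.mk p.1 p.2) (t := G.edgeFinset.filter fun e => ∀ v ∈ e, v ∈ A)]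
  · have h2 : ∀ e ∈ G.edgeFinset.filter fun e => ∀ v ∈ e, v ∈ A,
        (Finset.filter (fun p : V × V => Sym2.mk p.1 p.2 = e)
          ((A ×ˢ A).filter fun p => G.Adj p.1 p.2)).card = 2 := by
      intro e he
      simp only [Finset.mem_filter, SimpleGraph.mem_edgeFinset] at he
      obtain ⟨x, y⟩ := e
      have hxy : G.Adj x y := he.1
      have hx : x ∈ A := he.2 x (by simp)
      have hy : y ∈ A := he.2 y (by simp)
      have : Finset.filter (fun p : V × V => Sym2.mk p.1 p.2 = s(x, y))
          ((A ×ˢ A).filter fun p => G.Adj p.1 p.2) = {(x, y), (y, x)} := by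
        ext ⟨u, v⟩
        simp only [Finset.mem_filter, Finset.mem_product, Finset.mem_insert,
          Finset.mem_singleton, Prod.mk.injEq, Sym2.eq_iff]
        constructor
        · rintro ⟨_, h⟩; tauto
        · rintro (⟨rfl, rfl⟩ | ⟨rfl, rfl⟩) <;> simp [hx, hy, hxy, hxy.symm]
      rw [this, Finset.card_insert_of_notMem, Finset.card_singleton]
      simp only [Finset.mem_singleton, Prod.mk.injEq]
      rintro ⟨h1, h2⟩; exact hxy.ne h1
    rw [Finset.sum_congr rfl h2, Finset.sum_const, smul_eq_mul, mul_comm]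
    congr!
  · rintro ⟨u, v⟩ h
    simp only [Finset.mem_coe, Finset.mem_filter, Finset.mem_product] at h
    simp only [Finset.mem_coe, Finset.mem_filter, SimpleGraph.mem_edgeFinset]
    refine ⟨h.2, ?_⟩
    intro w hw
    rw [Sym2.mem_iff] at hw
    rcases hw with rfl | rfl
    exacts [h.1.1, h.1.2]

/-- The edge-count estimate (4.1): if `|A| ≥ n/2`, `|A| - |Ā| ≤ 32 α n` and
`e(A, Ā) ≤ 6 α n²` in a Dirac graph `G`, then `e(A) ≥ C(|A|,2) - 11 α n²`. -/
theorem edges_inside_dense_side (α : ℝ) (hα : 0 < α) (n : ℕ) (G : SimpleGraph (Fin n))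
    (hdeg : ∀ v, (n : ℝ) / 2 ≤ (G.degree v : ℝ)) (A : Finset (Fin n))
    (hA : (n : ℝ) / 2 ≤ (A.card : ℝ))
    (hk : (A.card : ℝ) - (Aᶜ.card : ℝ) ≤ 32 * α * n)
    (hcut : (eBetween G A Aᶜ : ℝ) ≤ 6 * α * (n : ℝ) ^ 2) :
    (A.card : ℝ) * ((A.card : ℝ) - 1) / 2 - 11 * α * (n : ℝ) ^ 2 ≤ (eIn G A : ℝ) := by
  have hsum := sum_deg_eq G A
  rw [eBetween_self] at hsum
  have hdegsum : (A.card : ℝ) * ((n : ℝ) / 2) ≤ ((∑ v ∈ A, G.degree v : ℕ) : ℝ) := by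
    push_cast
    calc (A.card : ℝ) * ((n : ℝ) / 2) = ∑ _v ∈ A, (n : ℝ) / 2 := by
          rw [Finset.sum_const, nsmul_eq_mul, mul_comm]
      _ ≤ ∑ v ∈ A, (G.degree v : ℝ) := Finset.sum_le_sum fun v _ => hdeg v
  rw [hsum] at hdegsum
  push_cast at hdegsum
  have hcompl : (Aᶜ.card : ℝ) = (n : ℝ) - (A.card : ℝ) := by
    have := Finset.card_compl A
    have h2 : A.card ≤ Fintype.card (Fin n) := Finset.card_le_univ A
    simp only [Fintype.card_fin] at this h2
    rw [this]
    push_cast [h2]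
    ring
  have hAn : (A.card : ℝ) ≤ (n : ℝ) := by
    have := Finset.card_le_univ A
    simp only [Fintype.card_fin] at this
    exact_mod_cast this
  rw [hcompl] at hk
  have h1 : (A.card : ℝ) * ((A.card : ℝ) - ((n : ℝ) - (A.card : ℝ))) ≤
      (A.card : ℝ) * (32 * α * n) :=
    mul_le_mul_of_nonneg_left hk (Nat.cast_nonneg A.card)
  have h2 : (A.card : ℝ) * (32 * α * n) ≤ (n : ℝ) * (32 * α * n) :=
    mul_le_mul_of_nonneg_right hAn (by positivity)
  nlinarith [h1, h2]
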